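/- Let a, b, c, d be nonnegative integers such that for every bit index j, the number of elements of {a,b,c,d} (with multiplicity) having j-th binary digit 1 is 0 or 3 (balanced). Suppose a move of Moore's nim(4, ≤2) is applied: exactly one or two of the four values are strictly decreased, yielding (a',b',c',d'). Then (a',b',c',d') is not balanced. -/

import Mathlib

/-- The `j`-th binary digit of `m`. -/
def digit (m j : ℕ) : ℕ := m / 2 ^ j % 2

/-- The `j`-th column sum of the Bouton matrix of a position. -/
def colSum {n : ℕ} (x : Fin n → ℕ) (j : ℕ) : ℕ := ∑ i, digit (x i) j

/-- A move of classical nim: strictly reduce exactly one pile. -/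
def NimMove {n : ℕ} (x y : Fin n → ℕ) : Prop :=
  ∃ i, y i < x i ∧ ∀ j, j ≠ i → y j = x j

/-- A move of Moore's nim(n, ≤k): strictly reduce at least one and at most `k` piles. -/
def MooreMove (k : ℕ) {n : ℕ} (x y : Fin n → ℕ) : Prop :=
  ∃ S : Finset (Fin n), S.Nonempty ∧ S.card ≤ k ∧ (∀ i ∈ S, y i < x i) ∧ ∀ i ∉ S, y i = x i

/-- A move of exact (n, k) nim: strictly reduce exactly `k` piles. -/
def ExactMove (k : ℕ) {n : ℕ} (x y : Fin n → ℕ) : Prop :=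
  ∃ S : Finset (Fin n), S.card = k ∧ (∀ i ∈ S, y i < x i) ∧ ∀ i ∉ S, y i = x i

/-- N-positions of an impartial game: there is a move to a position all of whose
moves lead to N-positions (i.e. a move to a P-position). -/
inductive NPos {α : Type*} (Move : α → α → Prop) : α → Prop where
  | intro {x y : α} (h : Move x y) (hy : ∀ z, Move y z → NPos Move z) : NPos Move x

/-- P-positions of an impartial game: every move leads to an N-position
(in particular, terminal positions are P-positions). -/
def PPos {α : Type*} (Move : α → α → Prop) (x : α) : Prop :=
  ∀ y, Move x y → NPos Move y

/-- a Moore's nim(4, ≤2) move applied to a balanced 4-tuple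
yields an unbalanced 4-tuple. -/
lemma digit_le_one (m j : ℕ) : digit m j ≤ 1 := by
  have := Nat.mod_lt (m / 2 ^ j) (show 0 < 2 by norm_num)
  unfold digit; omega

lemma mod_eq_sum_digit (m N : ℕ) :
    m % 2 ^ N = ∑ j ∈ Finset.range N, digit m j * 2 ^ j := by
  induction N with
  | zero => simp [Nat.mod_one]
  | succ n ih =>
    rw [Finset.sum_range_succ, ← ih]
    have h1 : (2:ℕ) ^ (n+1) = 2 ^ n * 2 := by ring
    rw [h1, Nat.mod_mul]
    unfold digit
    ring

lemma eq_sum_digit (m N : ℕ) (h : m < 2 ^ N) :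
    m = ∑ j ∈ Finset.range N, digit m j * 2 ^ j := by
  rw [← mod_eq_sum_digit, Nat.mod_eq_of_lt h]

theorem balanced_not_preserved (x x' : Fin 4 → ℕ)
    (hx : ∀ j, colSum x j = 0 ∨ colSum x j = 3) (h : MooreMove 2 x x') :
    ¬ ∀ j, colSum x' j = 0 ∨ colSum x' j = 3 := by
  intro hx'
  obtain ⟨S, hne, hcard, hdec, heq⟩ := h
  -- column sums agree
  have hcol : ∀ j, colSum x' j = colSum x j := by
    intro j
    have hsplit : ∀ y : Fin 4 → ℕ,
        colSum y j = ∑ i ∈ S, digit (y i) j + ∑ i ∈ Sᶜ, digit (y i) j := by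
      intro y
      rw [Finset.sum_add_sum_compl]
      rfl
    have hc : ∑ i ∈ Sᶜ, digit (x' i) j = ∑ i ∈ Sᶜ, digit (x i) j := by
      apply Finset.sum_congr rfl
      intro i hi
      rw [heq i (by simpa using hi)]
    have hb1 : ∑ i ∈ S, digit (x i) j ≤ 2 := by
      calc ∑ i ∈ S, digit (x i) j ≤ ∑ _i ∈ S, 1 :=
            Finset.sum_le_sum (fun i _ => digit_le_one _ _)
        _ = S.card := by simp
        _ ≤ 2 := hcard
    have hb2 : ∑ i ∈ S, digit (x' i) j ≤ 2 := by
      calc ∑ i ∈ S, digit (x' i) j ≤ ∑ _i ∈ S, 1 :=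
            Finset.sum_le_sum (fun i _ => digit_le_one _ _)
        _ = S.card := by simp
        _ ≤ 2 := hcard
    have e1 := hsplit x
    have e2 := hsplit x'
    have := hx j
    have := hx' j
    omega
  -- total sums agree
  set N := (∑ i, x i) + (∑ i, x' i) + 1 with hN
  have hlt : ∀ y : Fin 4 → ℕ, (∀ i, y i < 2 ^ N) → ∑ i, y i = ∑ j ∈ Finset.range N, colSum y j * 2 ^ j := by
    intro y hy
    calc ∑ i, y i = ∑ i, ∑ j ∈ Finset.range N, digit (y i) j * 2 ^ j := by
          exact Finset.sum_congr rfl (fun i _ => eq_sum_digit _ _ (hy i))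
      _ = ∑ j ∈ Finset.range N, (∑ i, digit (y i) j) * 2 ^ j := by
          rw [Finset.sum_comm]
          exact Finset.sum_congr rfl (fun j _ => (Finset.sum_mul ..).symm)
      _ = _ := rfl
  have hbig : ∀ m : ℕ, m ≤ N → m < 2 ^ N := fun m hm =>
    lt_of_le_of_lt hm (Nat.lt_two_pow_self (n := N))
  have hx2 : ∀ i, x i < 2 ^ N := by
    intro i
    exact hbig _ (le_trans (Finset.single_le_sum (f := x) (fun i _ => Nat.zero_le _) (Finset.mem_univ i)) (by omega))
  have hx'2 : ∀ i, x' i < 2 ^ N := by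
    intro i
    exact hbig _ (le_trans (Finset.single_le_sum (f := x') (fun i _ => Nat.zero_le _) (Finset.mem_univ i)) (by omega))
  have hsum : ∑ i, x' i = ∑ i, x i := by
    rw [hlt x hx2, hlt x' hx'2]
    exact Finset.sum_congr rfl (fun j _ => by rw [hcol j])
  -- but the sum strictly decreased
  obtain ⟨i0, hi0⟩ := hne
  have hstrict : ∑ i, x' i < ∑ i, x i := by
    apply Finset.sum_lt_sum
    · intro i _
      by_cases hi : i ∈ S
      · exact le_of_lt (hdec i hi)
      · exact le_of_eq (heq i hi)
    · exact ⟨i0, Finset.mem_univ i0, hdec i0 hi0⟩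
  omega
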